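/- Let H = Q₂ ⊕ [1] be the 3×3 matrix [[0,1,0],[1,0,0],[0,0,1]], and let B = J₂(0) ⊕ J₁(0) (1 in entry (1,2), zeros elsewhere). A 3×3 complex matrix A satisfies A² = B and H·A = Aᴴ·H if and only if A = [[0, α, β],[0,0,0],[0, β̄, 0]] for some real α and complex β with |β| = 1. -/

import Mathlib

open Matrix Polynomial

lemma cube_zero (A : Matrix (Fin 3) (Fin 3) ℂ) (h : A ^ 4 = 0) : A ^ 3 = 0 := by
  have hn : IsNilpotent A := ⟨4, h⟩
  have hc : A.charpoly = X ^ 3 := by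
    rw [← sub_eq_zero]
    have := Matrix.isNilpotent_charpoly_sub_pow_of_isNilpotent hn
    simpa using this.eq_zero
  have := Matrix.aeval_self_charpoly A
  rw [hc] at this
  simpa using this


theorem H_selfadjoint_sq_roots_J2_plus_J1 (A : Matrix (Fin 3) (Fin 3) ℂ) :
    (A ^ 2 = !![0, 1, 0; 0, 0, 0; 0, 0, 0] ∧
      (!![0, 1, 0; 1, 0, 0; 0, 0, 1] : Matrix (Fin 3) (Fin 3) ℂ) * A
        = Aᴴ * !![0, 1, 0; 1, 0, 0; 0, 0, 1]) ↔
      ∃ (α : ℝ) (β : ℂ), ‖β‖ = 1 ∧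
        A = !![0, (α : ℂ), β; 0, 0, 0; 0, (starRingEnd ℂ) β, 0] := by
  constructor
  · rintro ⟨h1, h2⟩
    have h4 : A ^ 4 = 0 := by
      have : A ^ 4 = (A ^ 2) * (A ^ 2) := by rw [← pow_add]
      rw [this, h1]
      ext i j
      fin_cases i <;> fin_cases j <;>
        simp [Matrix.mul_apply, Fin.sum_univ_succ, Matrix.vecHead, Matrix.vecTail, Function.comp]
    have h3 : A ^ 3 = 0 := cube_zero A h4
    have hBA : (!![0, 1, 0; 0, 0, 0; 0, 0, 0] : Matrix (Fin 3) (Fin 3) ℂ) * A = 0 := by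
      rw [← h1, ← pow_succ]
      exact h3
    have hAB : A * (!![0, 1, 0; 0, 0, 0; 0, 0, 0] : Matrix (Fin 3) (Fin 3) ℂ) = 0 := by
      rw [← h1, ← pow_succ']
      exact h3
    -- row 1 of A is zero
    have r10 : A 1 0 = 0 := by
      have := congrFun (congrFun hBA 0) 0
      simpa [Matrix.mul_apply, Fin.sum_univ_succ, Matrix.vecHead, Matrix.vecTail, Function.comp] using this
    have r11 : A 1 1 = 0 := by
      have := congrFun (congrFun hBA 0) 1
      simpa [Matrix.mul_apply, Fin.sum_univ_succ, Matrix.vecHead, Matrix.vecTail, Function.comp] using this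
    have r12 : A 1 2 = 0 := by
      have := congrFun (congrFun hBA 0) 2
      simpa [Matrix.mul_apply, Fin.sum_univ_succ, Matrix.vecHead, Matrix.vecTail, Function.comp] using this
    -- column 0 of A is zero
    have c00 : A 0 0 = 0 := by
      have := congrFun (congrFun hAB 0) 1
      simpa [Matrix.mul_apply, Fin.sum_univ_succ, Matrix.vecHead, Matrix.vecTail, Function.comp] using this
    have c20 : A 2 0 = 0 := by
      have := congrFun (congrFun hAB 2) 1
      simpa [Matrix.mul_apply, Fin.sum_univ_succ, Matrix.vecHead, Matrix.vecTail, Function.comp] using this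
    -- a01 real
    have ha01 : A 0 1 = (starRingEnd ℂ) (A 0 1) := by
      have := congrFun (congrFun h2 1) 1
      simpa [Matrix.mul_apply, Fin.sum_univ_succ, Matrix.conjTranspose_apply] using this
    -- a21 = conj a02
    have ha21 : A 2 1 = (starRingEnd ℂ) (A 0 2) := by
      have := congrFun (congrFun h2 2) 1
      simpa [Matrix.mul_apply, Fin.sum_univ_succ, Matrix.conjTranspose_apply] using this
    -- |a02| = 1
    have hsq01 : A 0 0 * A 0 1 + (A 0 1 * A 1 1 + A 0 2 * A 2 1) = 1 := by
      have := congrFun (congrFun h1 0) 1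
      rw [pow_two] at this
      simpa [Matrix.mul_apply, Fin.sum_univ_succ, Matrix.vecHead, Matrix.vecTail, Function.comp] using this
    have key : A 0 2 * (starRingEnd ℂ) (A 0 2) = 1 := by
      rw [c00, r11, ha21] at hsq01; simpa using hsq01
    have hns : Complex.normSq (A 0 2) = 1 := by
      have := key
      rw [Complex.mul_conj] at this
      exact_mod_cast this
    have habs : ‖A 0 2‖ = 1 := by
      rw [Complex.norm_def, hns, Real.sqrt_one]
    have hne : A 0 2 ≠ 0 := by
      intro h; rw [h] at habs; simp at habs
    have ha22 : A 2 2 = 0 := by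
      have hsq02 : A 0 0 * A 0 2 + (A 0 1 * A 1 2 + A 0 2 * A 2 2) = 0 := by
        have := congrFun (congrFun h1 0) 2
        rw [pow_two] at this
        simpa [Matrix.mul_apply, Fin.sum_univ_succ, Matrix.vecHead, Matrix.vecTail, Function.comp] using this
      rw [c00, r12] at hsq02
      simpa [hne] using hsq02
    refine ⟨(A 0 1).re, A 0 2, habs, ?_⟩
    ext i j
    fin_cases i <;> fin_cases j <;>
      simp [c00, r10, r11, r12, c20, ha22, ← ha21, Matrix.vecHead, Matrix.vecTail, Function.comp]
    exact (Complex.conj_eq_iff_re.mp ha01.symm).symm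
  · rintro ⟨α, β, hβ, rfl⟩
    have key : β * (starRingEnd ℂ) β = 1 := by
      rw [Complex.mul_conj]
      norm_cast
      rw [Complex.normSq_eq_norm_sq, hβ]; norm_num
    constructor
    · ext i j
      rw [pow_two]
      fin_cases i <;> fin_cases j <;>
        simp [Matrix.mul_apply, Fin.sum_univ_succ, Matrix.vecHead, Matrix.vecTail, key]
    · ext i j
      fin_cases i <;> fin_cases j <;>
        simp [Matrix.mul_apply, Fin.sum_univ_succ, Matrix.conjTranspose_apply]
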